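/- Let P₁, …, Pₙ be smooth families of mutually orthogonal projections with ΣPᵢ = 1 and fix distinct indices i, k. Then the matrix-valued 2-form Σ_{j,l} λⱼλₗ tr(Pᵢ dPⱼ Pₖ dPₗ) equals (λᵢ - λₖ)² tr(Pᵢ dPₖ dPₖ). -/

import Mathlib

/-- The trace of a continuous linear endomorphism. -/
noncomputable def trL {H : Type*} [NormedAddCommGroup H] [InnerProductSpace ℂ H]
    (T : H →L[ℂ] H) : ℂ :=
  LinearMap.trace ℂ H T.toLinearMap

set_option linter.unusedSectionVars false
set_option maxHeartbeats 1000000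

section helpers
variable {H : Type*} [NormedAddCommGroup H] [InnerProductSpace ℂ H] [FiniteDimensional ℂ H]

lemma trL_mul_comm (f g : H →L[ℂ] H) : trL (f * g) = trL (g * f) := by
  unfold trL
  exact LinearMap.trace_mul_comm ℂ f.toLinearMap g.toLinearMap

lemma trL_smul (c : ℂ) (f : H →L[ℂ] H) : trL (c • f) = c * trL f := by
  unfold trL
  rw [show (c • f).toLinearMap = c • f.toLinearMap from rfl, map_smul, smul_eq_mul]

lemma trL_neg (f : H →L[ℂ] H) : trL (-f) = -trL f := by
  unfold trL
  rw [show (-f).toLinearMap = -f.toLinearMap from rfl, map_neg]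

lemma trL_sum {ι : Type*} (s : Finset ι) (f : ι → (H →L[ℂ] H)) :
    trL (∑ j ∈ s, f j) = ∑ j ∈ s, trL (f j) := by
  unfold trL
  rw [show (∑ j ∈ s, f j).toLinearMap = ∑ j ∈ s, (f j).toLinearMap from
    map_sum (ContinuousLinearMap.coeLM ℂ) f s, map_sum]

lemma aux_sum {n : ℕ} (Q A B : Fin n → (H →L[ℂ] H)) (lam : Fin n → ℂ)
    (hQ : ∀ a b, Q a * Q b = if a = b then Q a else 0)
    (hA : ∀ a b, A a * Q b + Q a * A b = if a = b then A a else 0)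
    (hB : ∀ a b, B a * Q b + Q a * B b = if a = b then B a else 0)
    (i k : Fin n) (hik : i ≠ k) :
    ∑ j, ∑ l, lam j * lam l * trL (Q i * A j * Q k * B l)
      = (lam i - lam k) ^ 2 * trL (Q i * A k * B k) := by
  have hQi : Q i * Q i = Q i := by simpa using hQ i i
  have hQk : Q k * Q k = Q k := by simpa using hQ k k
  -- reduction of the middle factors
  have hU : ∀ j, Q i * A j * Q k
      = (if i = j then A i * Q k else 0) - (if j = k then A i * Q k else 0) := by
    intro j
    have h1 : Q i * A j = (if i = j then A i else 0) - A i * Q j :=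
      eq_sub_of_add_eq' (hA i j)
    rw [h1, sub_mul, mul_assoc, hQ j k]
    congr 1
    · split_ifs <;> simp
    · split_ifs with h <;> simp [h]
  have hV : ∀ l, Q k * B l * Q i
      = (if k = l then B k * Q i else 0) - (if l = i then B k * Q i else 0) := by
    intro l
    have h1 : Q k * B l = (if k = l then B k else 0) - B k * Q l :=
      eq_sub_of_add_eq' (hB k l)
    rw [h1, sub_mul, mul_assoc, hQ l i]
    congr 1
    · split_ifs <;> simp
    · split_ifs with h <;> simp [h]
  have hSU : ∑ j, lam j • (Q i * A j * Q k) = (lam i - lam k) • (A i * Q k) := by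
    simp only [hU, smul_sub, smul_ite, smul_zero]
    rw [Finset.sum_sub_distrib, Finset.sum_ite_eq, Finset.sum_ite_eq']
    simp [sub_smul]
  have hSV : ∑ l, lam l • (Q k * B l * Q i) = (lam k - lam i) • (B k * Q i) := by
    simp only [hV, smul_sub, smul_ite, smul_zero]
    rw [Finset.sum_sub_distrib, Finset.sum_ite_eq, Finset.sum_ite_eq']
    simp [sub_smul]
  -- cyclic insertion of Q i, Q k
  have step1 : ∀ j l, trL (Q i * A j * Q k * B l)
      = trL ((Q i * A j * Q k) * (Q k * B l * Q i)) := by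
    intro j l
    have e1 : (Q i * A j * Q k) * (Q k * B l * Q i)
        = (Q i * A j * Q k * Q k * B l) * Q i := by noncomm_ring
    have e2 : Q i * (Q i * A j * Q k * Q k * B l) = Q i * A j * Q k * B l := by
      rw [show Q i * (Q i * A j * Q k * Q k * B l)
          = ((Q i * Q i) * A j * (Q k * Q k)) * B l by noncomm_ring, hQi, hQk]
    conv_rhs => rw [e1, trL_mul_comm, e2]
  calc ∑ j, ∑ l, lam j * lam l * trL (Q i * A j * Q k * B l)
      = trL ((∑ j, lam j • (Q i * A j * Q k)) * (∑ l, lam l • (Q k * B l * Q i))) := by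
        rw [Finset.sum_mul_sum, trL_sum]
        refine Finset.sum_congr rfl fun j _ => ?_
        rw [trL_sum]
        refine Finset.sum_congr rfl fun l _ => ?_
        rw [smul_mul_smul_comm, trL_smul, step1]
    _ = (lam i - lam k) * ((lam k - lam i) *
          trL ((A i * Q k) * (B k * Q i))) := by
        rw [hSU, hSV, smul_mul_smul_comm, trL_smul, mul_assoc]
    _ = (lam i - lam k) ^ 2 * trL (Q i * A k * B k) := by
        have hik' : A i * Q k = -(Q i * A k) := by
          have := hA i k
          rw [if_neg hik] at this
          exact eq_neg_of_add_eq_zero_left this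
        have e3 : Q i * A k * (B k * Q i) = (Q i * A k * B k) * Q i := by noncomm_ring
        have e4 : Q i * (Q i * A k * B k) = Q i * A k * B k := by
          rw [show Q i * (Q i * A k * B k) = (Q i * Q i) * A k * B k by noncomm_ring, hQi]
        rw [hik', neg_mul, trL_neg, e3, trL_mul_comm, e4]
        ring

end helpers


/-- For smooth mutually orthogonal projections `P₁,…,Pₙ` with `ΣPᵢ = 1`,
distinct scalars `λᵢ`, and fixed `i ≠ k`, the scalar 2-form identity
`Σ_{j,l} λⱼλₗ tr(Pᵢ dPⱼ Pₖ dPₗ) = (λᵢ - λₖ)² tr(Pᵢ dPₖ dPₖ)` holds, where products of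
operator-valued 1-forms are wedge products (evaluated on tangent vectors `v, w`). -/
theorem two_form_sum_eq
    {E H : Type*} [NormedAddCommGroup E] [NormedSpace ℝ E]
    [NormedAddCommGroup H] [InnerProductSpace ℂ H] [FiniteDimensional ℂ H]
    {n : ℕ} (P : Fin n → E → (H →L[ℂ] H)) (lam : Fin n → ℂ)
    (hdist : Function.Injective lam)
    (hPdiff : ∀ i, Differentiable ℝ (P i))
    (hsa : ∀ i m, IsSelfAdjoint (P i m))
    (horth : ∀ i j m, P i m * P j m = if i = j then P i m else 0)
    (hsum : ∀ m, ∑ i, P i m = 1)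
    (i k : Fin n) (hik : i ≠ k) (m v w : E) :
    (∑ j, ∑ l, lam j * lam l *
        (trL (P i m * (fderiv ℝ (P j) m v) * P k m * (fderiv ℝ (P l) m w)) -
          trL (P i m * (fderiv ℝ (P j) m w) * P k m * (fderiv ℝ (P l) m v)))) =
      (lam i - lam k) ^ 2 *
        (trL (P i m * (fderiv ℝ (P k) m v) * (fderiv ℝ (P k) m w)) -
          trL (P i m * (fderiv ℝ (P k) m w) * (fderiv ℝ (P k) m v))) := by
  have hder : ∀ (u : E) (a b : Fin n),
      (fderiv ℝ (P a) m u) * P b m + P a m * (fderiv ℝ (P b) m u)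
        = if a = b then fderiv ℝ (P a) m u else 0 := by
    intro u a b
    have h1 : fderiv ℝ (fun x => P a x * P b x) m
        = P a m • fderiv ℝ (P b) m + (fderiv ℝ (P a) m).smulRight (P b m) :=
      fderiv_mul' (hPdiff a m) (hPdiff b m)
    have h2 : (fun x => P a x * P b x) = fun x => if a = b then P a x else 0 :=
      funext fun x => horth a b x
    rw [h2] at h1
    by_cases hab : a = b
    · subst hab
      simp only [if_pos] at h1 ⊢
      have h3 := congrArg (fun (L : E →L[ℝ] (H →L[ℂ] H)) => L u) h1
      simp only [ContinuousLinearMap.add_apply, ContinuousLinearMap.smul_apply,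
        ContinuousLinearMap.smulRight_apply, smul_eq_mul] at h3
      rw [add_comm]
      exact h3.symm
    · simp only [if_neg hab] at h1 ⊢
      rw [fderiv_fun_const] at h1
      have h3 := congrArg (fun (L : E →L[ℝ] (H →L[ℂ] H)) => L u) h1
      simp only [ContinuousLinearMap.add_apply, ContinuousLinearMap.smul_apply,
        ContinuousLinearMap.smulRight_apply, smul_eq_mul,
        ContinuousLinearMap.zero_apply] at h3
      rw [add_comm]
      exact h3.symm
  have hQ : ∀ a b, P a m * P b m = if a = b then P a m else 0 := fun a b => horth a b m
  have h1 := aux_sum (fun j => P j m) (fun j => fderiv ℝ (P j) m v)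
    (fun j => fderiv ℝ (P j) m w) lam hQ (hder v) (hder w) i k hik
  have h2 := aux_sum (fun j => P j m) (fun j => fderiv ℝ (P j) m w)
    (fun j => fderiv ℝ (P j) m v) lam hQ (hder w) (hder v) i k hik
  simp only [mul_sub, Finset.sum_sub_distrib]
  rw [h1, h2]
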